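/- Let T̂ be a continuous skew product on 𝕋¹×ℝ over an irrational rotation with monotone increasing fibre maps. If A and B are minimal sets for T̂, then either A ≺ B (i.e. φ⁺_A < φ⁻_B everywhere), or A = B, or B ≺ A. -/

import Mathlib

open Set Filter Topology

/-- Dense sets map to dense sets along continuous surjections. -/
lemma dense_image_of_surj {X Y : Type*} [TopologicalSpace X] [TopologicalSpace Y]
    {f : X → Y} (hc : Continuous f) (hs : Function.Surjective f)
    {s : Set X} (h : Dense s) : Dense (f '' s) := by
  rw [dense_iff_inter_open] at h ⊢
  intro U hU hUne
  obtain ⟨y, hy⟩ := hUne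
  obtain ⟨x, rfl⟩ := hs y
  obtain ⟨z, hz, hzs⟩ := h (f ⁻¹' U) (hU.preimage hc) ⟨x, hy⟩
  exact ⟨f z, hz, z, hzs, rfl⟩

set_option maxHeartbeats 1000000 in
/-- The ℤ-orbit of an irrational rotation is dense in the circle. -/
lemma dense_zsmul (ω : ℝ) (hω : Irrational ω) :
    Dense (Set.range fun k : ℤ => k • (ω : AddCircle (1:ℝ))) := by
  have hSd : Dense ((AddSubgroup.zmultiples ω ⊔ AddSubgroup.zmultiples (1:ℝ) : AddSubgroup ℝ) : Set ℝ) := by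
    rcases (AddSubgroup.zmultiples ω ⊔ AddSubgroup.zmultiples (1:ℝ)).dense_or_cyclic with hd | ⟨a, ha⟩
    · exact hd
    · exfalso
      have hωS : ω ∈ AddSubgroup.zmultiples ω ⊔ AddSubgroup.zmultiples (1:ℝ) :=
        AddSubgroup.mem_sup_left (AddSubgroup.mem_zmultiples ω)
      have h1S : (1:ℝ) ∈ AddSubgroup.zmultiples ω ⊔ AddSubgroup.zmultiples (1:ℝ) :=
        AddSubgroup.mem_sup_right (AddSubgroup.mem_zmultiples 1)
      rw [ha, AddSubgroup.mem_closure_singleton] at hωS h1S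
      obtain ⟨m, hm⟩ := hωS
      obtain ⟨n, hn⟩ := h1S
      rw [zsmul_eq_mul] at hm hn
      have hn0 : (n:ℝ) ≠ 0 := by
        intro h
        rw [h, zero_mul] at hn
        exact one_ne_zero hn.symm
      have key : (m:ℝ) = ω * n := by
        calc (m:ℝ) = (m:ℝ) * ((n:ℝ) * a) := by rw [hn]; ring
        _ = ω * n := by rw [← hm]; ring
      refine hω ⟨(m:ℚ)/(n:ℚ), ?_⟩
      push_cast
      rw [div_eq_iff hn0, key]
  have himg : ((↑) : ℝ → AddCircle (1:ℝ)) ''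
        ((AddSubgroup.zmultiples ω ⊔ AddSubgroup.zmultiples (1:ℝ) : AddSubgroup ℝ) : Set ℝ)
      = Set.range fun k : ℤ => k • (ω : AddCircle (1:ℝ)) := by
    ext x
    constructor
    · rintro ⟨r, hr, rfl⟩
      rw [SetLike.mem_coe, AddSubgroup.mem_sup] at hr
      obtain ⟨y, hy, z, hz, rfl⟩ := hr
      obtain ⟨k, rfl⟩ := AddSubgroup.mem_zmultiples_iff.mp hy
      obtain ⟨j, rfl⟩ := AddSubgroup.mem_zmultiples_iff.mp hz
      refine ⟨k, ?_⟩
      have h1 : ((1:ℝ) : AddCircle (1:ℝ)) = 0 := AddCircle.coe_period 1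
      rw [AddCircle.coe_add, AddCircle.coe_zsmul, AddCircle.coe_zsmul, h1, smul_zero, add_zero]
    · rintro ⟨k, rfl⟩
      exact ⟨k • ω, AddSubgroup.mem_sup_left
        (AddSubgroup.zsmul_mem _ (AddSubgroup.mem_zmultiples ω) k),
        by simp [AddCircle.coe_zsmul]⟩
  rw [← himg]
  exact dense_image_of_surj QuotientAddGroup.continuous_mk QuotientAddGroup.mk_surjective hSd

/-- The upward-saturation of a compact set is (sequentially) closed. -/
lemma upset_closed (B : Set (AddCircle (1:ℝ) × ℝ)) (hBc : IsCompact B) :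
    IsClosed {p : AddCircle (1:ℝ) × ℝ | ∃ y, (p.1, y) ∈ B ∧ y ≤ p.2} := by
  refine IsSeqClosed.isClosed ?_
  intro u p hu hup
  choose y hyB hyle using hu
  obtain ⟨q, hqB, φ, hφ, hql⟩ := hBc.tendsto_subseq (x := fun n => ((u n).1, y n)) hyB
  have hup' : Tendsto (fun n => u (φ n)) atTop (𝓝 p) := hup.comp hφ.tendsto_atTop
  have h1 : Tendsto (fun n => (u (φ n)).1) atTop (𝓝 p.1) :=
    (continuous_fst.tendsto p).comp hup'
  have h1' : Tendsto (fun n => (u (φ n)).1) atTop (𝓝 q.1) := by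
    simpa [Function.comp_def] using (continuous_fst.tendsto q).comp hql
  have hq1 : q.1 = p.1 := tendsto_nhds_unique h1' h1
  have h2 : Tendsto (fun n => y (φ n)) atTop (𝓝 q.2) := by
    simpa [Function.comp_def] using (continuous_snd.tendsto q).comp hql
  have h2' : Tendsto (fun n => (u (φ n)).2) atTop (𝓝 p.2) :=
    (continuous_snd.tendsto p).comp hup'
  have hq2 : q.2 ≤ p.2 := le_of_tendsto_of_tendsto' h2 h2' fun n => hyle (φ n)
  refine ⟨q.2, ?_, hq2⟩
  have : (p.1, q.2) = q := by rw [← hq1]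
  rwa [this]

/-- If some point of the minimal set `A` lies (weakly) above a point of `B` in the same
fibre, then every point of `A` lies strictly above some point of `B` in the same fibre. -/
lemma above_lemma (ω : ℝ)
    (T : AddCircle (1:ℝ) × ℝ → AddCircle (1:ℝ) × ℝ)
    (hbase : ∀ p : AddCircle (1:ℝ) × ℝ, (T p).1 = p.1 + (ω : AddCircle (1:ℝ)))
    (hmono : ∀ θ : AddCircle (1:ℝ), Monotone fun x : ℝ => (T (θ, x)).2)
    (A B : Set (AddCircle (1:ℝ) × ℝ))
    (hAc : IsCompact A) (hAinv : T '' A = A)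
    (hAmin : ∀ p ∈ A, closure (Set.range fun n : ℕ => T^[n] p) = A)
    (hBc : IsCompact B) (hBinv : T '' B = B)
    (hdisj : ∀ p ∈ A, p ∉ B)
    (hne : ∃ p ∈ A, ∃ y, (p.1, y) ∈ B ∧ y ≤ p.2) :
    ∀ p ∈ A, ∃ y, (p.1, y) ∈ B ∧ y < p.2 := by
  have hCc : IsClosed {p : AddCircle (1:ℝ) × ℝ | ∃ y, (p.1, y) ∈ B ∧ y ≤ p.2} :=
    upset_closed B hBc
  set C := {p : AddCircle (1:ℝ) × ℝ | ∃ y, (p.1, y) ∈ B ∧ y ≤ p.2} with hC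
  -- forward invariance of A ∩ C
  have hTA : ∀ p ∈ A, T p ∈ A := fun p hp => hAinv ▸ mem_image_of_mem T hp
  have hTB : ∀ p ∈ B, T p ∈ B := fun p hp => hBinv ▸ mem_image_of_mem T hp
  have hstep : ∀ p ∈ A ∩ C, T p ∈ A ∩ C := by
    rintro p ⟨hpA, y, hyB, hyle⟩
    refine ⟨hTA p hpA, (T (p.1, y)).2, ?_, ?_⟩
    · have h1 : (T (p.1, y)).1 = (T p).1 := by rw [hbase, hbase]
      have : ((T p).1, (T (p.1, y)).2) = T (p.1, y) := by rw [← h1]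
      rw [this]
      exact hTB _ hyB
    · have := hmono p.1 hyle
      simpa using this
  have horb : ∀ p ∈ A ∩ C, ∀ n : ℕ, T^[n] p ∈ A ∩ C := by
    intro p hp n
    induction n with
    | zero => simpa using hp
    | succ n ih => rw [Function.iterate_succ_apply']; exact hstep _ ih
  obtain ⟨p₀, hp₀A, hp₀C⟩ := hne
  have hAC : A ⊆ C := by
    have hA : A = closure (Set.range fun n : ℕ => T^[n] p₀) := (hAmin p₀ hp₀A).symm
    rw [hA]
    refine closure_minimal ?_ hCc
    rintro _ ⟨n, rfl⟩
    exact (horb p₀ ⟨hp₀A, hp₀C⟩ n).2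
  intro p hp
  obtain ⟨y, hyB, hyle⟩ := hAC hp
  rcases lt_or_eq_of_le hyle with h | h
  · exact ⟨y, hyB, h⟩
  · exfalso
    have : (p.1, y) = p := by rw [h]
    exact hdisj p hp (this ▸ hyB)

/-- A compact set invariant under the skew product projects onto the whole circle. -/
lemma proj_univ (ω : ℝ) (hω : Irrational ω)
    (T : AddCircle (1:ℝ) × ℝ → AddCircle (1:ℝ) × ℝ)
    (hbase : ∀ p : AddCircle (1:ℝ) × ℝ, (T p).1 = p.1 + (ω : AddCircle (1:ℝ)))
    (A : Set (AddCircle (1:ℝ) × ℝ))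
    (hAne : A.Nonempty) (hAc : IsCompact A) (hAinv : T '' A = A) :
    Prod.fst '' A = univ := by
  set ωc : AddCircle (1:ℝ) := (ω : AddCircle (1:ℝ)) with hωc
  have hPc : IsClosed (Prod.fst '' A) := (hAc.image continuous_fst).isClosed
  have hrot : (fun θ => θ + ωc) '' (Prod.fst '' A) = Prod.fst '' A := by
    conv_rhs => rw [← hAinv]
    rw [← image_comp, ← image_comp]
    exact image_congr fun p _ => (hbase p).symm
  obtain ⟨p0, hp0⟩ := hAne
  have hk : ∀ k : ℤ, p0.1 + k • ωc ∈ Prod.fst '' A := by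
    intro k
    induction k using Int.induction_on with
    | zero => rw [zero_zsmul, add_zero]; exact ⟨p0, hp0, rfl⟩
    | succ n ih =>
      have he : p0.1 + ((n:ℤ)+1) • ωc = (p0.1 + (n:ℤ) • ωc) + ωc := by
        rw [add_zsmul, one_zsmul]; abel
      rw [he, ← hrot]
      exact mem_image_of_mem _ ih
    | pred n ih =>
      rw [← hrot] at ih
      obtain ⟨θ, hθ, hθe⟩ := ih
      have hθe' : θ + ωc = p0.1 + (-(n:ℤ)) • ωc := hθe
      have hid : p0.1 + (-(n:ℤ)-1) • ωc = (p0.1 + (-(n:ℤ)) • ωc) - ωc := by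
        rw [sub_zsmul, one_zsmul]; abel
      rw [hid, ← hθe', add_sub_cancel_right]
      exact hθ
  apply eq_univ_of_univ_subset
  have hdense : Dense ((fun t => p0.1 + t) '' (Set.range fun k : ℤ => k • ωc)) :=
    dense_image_of_surj (continuous_const.add continuous_id)
      (fun y => ⟨y - p0.1, by simp⟩) (dense_zsmul ω hω)
  rw [← hdense.closure_eq]
  refine closure_minimal ?_ hPc
  rintro _ ⟨_, ⟨k, rfl⟩, rfl⟩
  exact hk k

lemma fiber_compact (A : Set (AddCircle (1:ℝ) × ℝ)) (hAc : IsCompact A)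
    (θ : AddCircle (1:ℝ)) : IsCompact {x : ℝ | (θ, x) ∈ A} := by
  have hcl : IsClosed {x : ℝ | (θ, x) ∈ A} :=
    hAc.isClosed.preimage (Continuous.prodMk_right θ)
  exact IsCompact.of_isClosed_subset (hAc.image continuous_snd) hcl
    (fun x hx => ⟨(θ, x), hx, rfl⟩)

/-- two minimal sets of a quasiperiodically forced monotone map are either
equal or strictly ordered. -/
theorem minimal_sets_ordered (ω : ℝ) (hω : Irrational ω)
    (T : AddCircle (1:ℝ) × ℝ → AddCircle (1:ℝ) × ℝ)
    (hcont : Continuous T)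
    (hbase : ∀ p : AddCircle (1:ℝ) × ℝ, (T p).1 = p.1 + (ω : AddCircle (1:ℝ)))
    (hmono : ∀ θ : AddCircle (1:ℝ), Monotone fun x : ℝ => (T (θ, x)).2)
    (A B : Set (AddCircle (1:ℝ) × ℝ))
    (hAne : A.Nonempty) (hAc : IsCompact A) (hAinv : T '' A = A)
    (hAmin : ∀ p ∈ A, closure (Set.range fun n : ℕ => T^[n] p) = A)
    (hBne : B.Nonempty) (hBc : IsCompact B) (hBinv : T '' B = B)
    (hBmin : ∀ p ∈ B, closure (Set.range fun n : ℕ => T^[n] p) = B) :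
    (∀ θ : AddCircle (1:ℝ), sSup {x : ℝ | (θ, x) ∈ A} < sInf {x : ℝ | (θ, x) ∈ B}) ∨
    A = B ∨
    (∀ θ : AddCircle (1:ℝ), sSup {x : ℝ | (θ, x) ∈ B} < sInf {x : ℝ | (θ, x) ∈ A}) := by
  by_contra hcon
  push_neg at hcon
  obtain ⟨⟨θ₀, hθ₀⟩, hAB, θ₁, hθ₁⟩ := hcon
  -- A and B are disjoint
  have hdisjAB : ∀ p ∈ A, p ∉ B := by
    intro p hpA hpB
    exact hAB ((hAmin p hpA).symm.trans (hBmin p hpB))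
  have hdisjBA : ∀ p ∈ B, p ∉ A := fun p hpB hpA => hdisjAB p hpA hpB
  -- fibres are nonempty
  have hfibA : ∀ θ : AddCircle (1:ℝ), {x : ℝ | (θ, x) ∈ A}.Nonempty := by
    intro θ
    have : θ ∈ Prod.fst '' A := by
      rw [proj_univ ω hω T hbase A hAne hAc hAinv]; trivial
    obtain ⟨p, hp, hp1⟩ := this
    exact ⟨p.2, by rw [← hp1]; simpa using hp⟩
  have hfibB : ∀ θ : AddCircle (1:ℝ), {x : ℝ | (θ, x) ∈ B}.Nonempty := by
    intro θ
    have : θ ∈ Prod.fst '' B := by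
      rw [proj_univ ω hω T hbase B hBne hBc hBinv]; trivial
    obtain ⟨p, hp, hp1⟩ := this
    exact ⟨p.2, by rw [← hp1]; simpa using hp⟩
  -- extremal points of fibres belong to the sets
  have hsupA : ∀ θ, (θ, sSup {x : ℝ | (θ, x) ∈ A}) ∈ A :=
    fun θ => (fiber_compact A hAc θ).sSup_mem (hfibA θ)
  have hsupB : ∀ θ, (θ, sSup {x : ℝ | (θ, x) ∈ B}) ∈ B :=
    fun θ => (fiber_compact B hBc θ).sSup_mem (hfibB θ)
  have hinfA : ∀ θ, (θ, sInf {x : ℝ | (θ, x) ∈ A}) ∈ A :=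
    fun θ => (fiber_compact A hAc θ).sInf_mem (hfibA θ)
  have hinfB : ∀ θ, (θ, sInf {x : ℝ | (θ, x) ∈ B}) ∈ B :=
    fun θ => (fiber_compact B hBc θ).sInf_mem (hfibB θ)
  -- every point of A is strictly above some point of B
  have h1 : ∀ p ∈ A, ∃ y, (p.1, y) ∈ B ∧ y < p.2 := by
    refine above_lemma ω T hbase hmono A B hAc hAinv hAmin hBc hBinv hdisjAB
      ⟨(θ₀, sSup {x : ℝ | (θ₀, x) ∈ A}), hsupA θ₀,
        sInf {x : ℝ | (θ₀, x) ∈ B}, hinfB θ₀, hθ₀⟩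
  -- every point of B is strictly above some point of A
  have h2 : ∀ p ∈ B, ∃ y, (p.1, y) ∈ A ∧ y < p.2 := by
    refine above_lemma ω T hbase hmono B A hBc hBinv hBmin hAc hAinv hdisjBA
      ⟨(θ₁, sSup {x : ℝ | (θ₁, x) ∈ B}), hsupB θ₁,
        sInf {x : ℝ | (θ₁, x) ∈ A}, hinfA θ₁, hθ₁⟩
  -- contradiction at the bottom of a fibre of A
  set θ := θ₀
  set m := sInf {x : ℝ | (θ, x) ∈ A} with hm
  obtain ⟨y, hyB, hym⟩ := h1 (θ, m) (hinfA θ)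
  obtain ⟨z, hzA, hzy⟩ := h2 (θ, y) hyB
  have hle : m ≤ z := csInf_le (fiber_compact A hAc θ).bddBelow hzA
  simp only at hym hzy
  linarith
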